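/- Let $\alpha, \beta, r \in (0,1)$ with $\alpha + \beta = 1$ and $\beta > r$. Then $\lim_{T \to \infty} \frac{1}{T} \log_2 \sum_{t = \lceil (1-r)T \rceil}^{T} \binom{T}{t} \alpha^t \beta^{T-t} = H(r) + r \log_2 \beta + (1-r) \log_2 \alpha$, where $H(r) = -r\log_2 r - (1-r)\log_2(1-r)$. -/

import Mathlib

open Filter Real Finset

lemma step_up (T k t : ℕ) (hk : k ≤ T) (ht : t < k) :
    T.choose t * k^t * (T-k)^(T-t) ≤ T.choose (t+1) * k^(t+1) * (T-k)^(T-(t+1)) := by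
  have hTt : T - t = (T - (t+1)) + 1 := by omega
  rw [hTt, pow_succ]
  have h1 : T.choose t * (T - k) ≤ T.choose (t+1) * k := by
    have key : T.choose (t+1) * (t+1) = T.choose t * (T - t) := Nat.choose_succ_right_eq T t
    have h2 : T.choose t * (T - k) * (t+1) ≤ T.choose (t+1) * k * (t+1) := by
      have : T.choose t * (T - k) * (t+1) ≤ T.choose t * ((T - t) * k) := by
        rw [Nat.mul_assoc]
        exact Nat.mul_le_mul_left _ (Nat.mul_le_mul (by omega) (by omega))
      calc T.choose t * (T - k) * (t+1) ≤ T.choose t * ((T-t) * k) := this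
        _ = T.choose t * (T - t) * k := by ring
        _ = T.choose (t+1) * (t+1) * k := by rw [key]
        _ = T.choose (t+1) * k * (t+1) := by ring
    exact Nat.le_of_mul_le_mul_right h2 (by omega)
  calc T.choose t * k^t * ((T-k)^(T-(t+1)) * (T-k))
      = (T.choose t * (T-k)) * (k^t * (T-k)^(T-(t+1))) := by ring
    _ ≤ (T.choose (t+1) * k) * (k^t * (T-k)^(T-(t+1))) := Nat.mul_le_mul_right _ h1
    _ = T.choose (t+1) * (k^t * k) * (T-k)^(T-(t+1)) := by ring
    _ = T.choose (t+1) * k^(t+1) * (T-k)^(T-(t+1)) := by rw [pow_succ]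

lemma step_down (T k t : ℕ) (hk : k ≤ t) (ht : t < T) :
    T.choose (t+1) * k^(t+1) * (T-k)^(T-(t+1)) ≤ T.choose t * k^t * (T-k)^(T-t) := by
  have hTt : T - t = (T - (t+1)) + 1 := by omega
  rw [hTt, pow_succ]
  have h1 : T.choose (t+1) * k ≤ T.choose t * (T - k) := by
    have key : T.choose (t+1) * (t+1) = T.choose t * (T - t) := Nat.choose_succ_right_eq T t
    have h2 : T.choose (t+1) * k * (t+1) ≤ T.choose t * (T - k) * (t+1) := by
      calc T.choose (t+1) * k * (t+1) = T.choose (t+1) * (t+1) * k := by ring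
        _ = T.choose t * (T - t) * k := by rw [key]
        _ = T.choose t * ((T-t) * k) := by ring
        _ ≤ T.choose t * ((T-k) * (t+1)) := Nat.mul_le_mul_left _ (Nat.mul_le_mul (by omega) (by omega))
        _ = T.choose t * (T - k) * (t+1) := by ring
    exact Nat.le_of_mul_le_mul_right h2 (by omega)
  rw [pow_succ]
  calc T.choose (t+1) * (k^t * k) * (T-k)^(T-(t+1))
      = (T.choose (t+1) * k) * (k^t * (T-k)^(T-(t+1))) := by ring
    _ ≤ (T.choose t * (T-k)) * (k^t * (T-k)^(T-(t+1))) := Nat.mul_le_mul_right _ h1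
    _ = T.choose t * k^t * ((T-k)^(T-(t+1)) * (T-k)) := by ring

lemma term_le_max (T k t : ℕ) (hk : k ≤ T) (ht : t ≤ T) :
    T.choose t * k^t * (T-k)^(T-t) ≤ T.choose k * k^k * (T-k)^(T-k) := by
  rcases le_or_gt t k with h | h
  · obtain ⟨d, rfl⟩ : ∃ d, t + d = k := ⟨k - t, by omega⟩
    clear h ht
    induction d generalizing t with
    | zero => simp
    | succ d ih =>
      have h1 := step_up T (t + (d+1)) t hk (by omega)
      have h2 := ih (t+1) (by omega)
      have h3 : t + (d+1) = (t+1) + d := by omega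
      rw [h3] at h1 ⊢
      exact h1.trans h2
  · obtain ⟨d, rfl⟩ : ∃ d, t = k + d := ⟨t - k, by omega⟩
    clear h
    induction d with
    | zero => simp
    | succ d ih =>
      have h1 := step_down T k (k+d) (by omega) (by omega)
      have h3 : k + (d+1) = (k+d)+1 := by omega
      rw [h3]
      exact h1.trans (ih (by omega))

lemma central_bound (T k : ℕ) (hk : k ≤ T) :
    T^T ≤ (T+1) * (T.choose k * k^k * (T-k)^(T-k)) := by
  have hsum : ∑ t ∈ range (T+1), T.choose t * k^t * (T-k)^(T-t) = T^T := by
    have h := add_pow k (T-k) T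
    rw [Nat.add_sub_cancel' hk] at h
    rw [h]
    exact Finset.sum_congr rfl (fun t _ => by push_cast; ring)
  calc T^T = ∑ t ∈ range (T+1), T.choose t * k^t * (T-k)^(T-t) := hsum.symm
    _ ≤ ∑ _t ∈ range (T+1), T.choose k * k^k * (T-k)^(T-k) :=
        Finset.sum_le_sum (fun t htm => term_le_max T k t hk (by simpa using Finset.mem_range_succ_iff.mp htm))
    _ = (T+1) * (T.choose k * k^k * (T-k)^(T-k)) := by
        rw [Finset.sum_const, Finset.card_range, smul_eq_mul]

private lemma aux_x_tendsto (r : ℝ) (hr0 : 0 < r) (hr1 : r < 1) :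
    Tendsto (fun T : ℕ => (⌈(1 - r) * (T:ℝ)⌉₊ : ℝ) / T) atTop (nhds (1-r)) := by
  have h1r0 : (0:ℝ) < 1 - r := by linarith
  have hupper : Tendsto (fun T : ℕ => (1-r) + 1/(T:ℝ)) atTop (nhds (1-r)) := by
    have : Tendsto (fun n : ℕ => 1 / (n : ℝ)) atTop (nhds 0) := tendsto_one_div_atTop_nhds_zero_nat
    simpa using tendsto_const_nhds.add this
  refine tendsto_of_tendsto_of_tendsto_of_le_of_le' tendsto_const_nhds hupper ?_ ?_
  · filter_upwards [eventually_ge_atTop 1] with T hT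
    have hT0 : (0:ℝ) < T := by exact_mod_cast hT
    rw [le_div_iff₀ hT0]
    exact Nat.le_ceil _
  · filter_upwards [eventually_ge_atTop 1] with T hT
    have hT0 : (0:ℝ) < T := by exact_mod_cast hT
    rw [div_le_iff₀ hT0]
    have h1 := Nat.ceil_lt_add_one (by positivity : (0:ℝ) ≤ (1-r) * T)
    have h2 : (1-r+1/(T:ℝ))*T = (1-r)*T + 1 := by field_simp
    linarith

private lemma aux_err_tendsto :
    Tendsto (fun T : ℕ => Real.logb 2 ((T:ℝ)+1) / T) atTop (nhds 0) := by
  have h1 : (fun T : ℕ => Real.log ((T:ℝ)+1)) =o[atTop] (fun T : ℕ => ((T:ℝ)+1)) :=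
    Real.isLittleO_log_id_atTop.comp_tendsto
      (tendsto_atTop_add_const_right atTop 1 tendsto_natCast_atTop_atTop)
  have h2 : (fun T : ℕ => ((T:ℝ)+1)) =O[atTop] (fun T : ℕ => (T:ℝ)) := by
    apply Asymptotics.IsBigO.of_bound 2
    filter_upwards [eventually_ge_atTop 1] with T hT
    have hT0 : (1:ℝ) ≤ T := by exact_mod_cast hT
    simp only [Real.norm_eq_abs]
    rw [abs_of_nonneg (by linarith), abs_of_nonneg (by linarith)]
    linarith
  have h3 := (h1.trans_isBigO h2).tendsto_div_nhds_zero
  have h4 : Tendsto (fun T : ℕ => Real.log ((T:ℝ)+1) / T / Real.log 2) atTop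
      (nhds (0 / Real.log 2)) := h3.div_const _
  simp only [zero_div] at h4
  refine h4.congr (fun T => ?_)
  rw [Real.logb]
  ring

private lemma aux_m_tendsto (α β r : ℝ) (hα0 : 0 < α) (hβ0 : 0 < β)
    (hr0 : 0 < r) (hr1 : r < 1)
    (x : ℕ → ℝ) (hx : Tendsto x atTop (nhds (1-r))) :
    Tendsto (fun T => x T * Real.logb 2 (α/(1-r)) + (1 - x T) * Real.logb 2 (β/r)) atTop
      (nhds ((-r * Real.logb 2 r - (1 - r) * Real.logb 2 (1 - r))
        + r * Real.logb 2 β + (1 - r) * Real.logb 2 α)) := by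
  have h1r0 : (0:ℝ) < 1 - r := by linarith
  have key : Tendsto (fun T => x T * Real.logb 2 (α/(1-r)) + (1 - x T) * Real.logb 2 (β/r)) atTop
      (nhds ((1-r) * Real.logb 2 (α/(1-r)) + (1 - (1-r)) * Real.logb 2 (β/r))) :=
    (hx.mul tendsto_const_nhds).add ((tendsto_const_nhds.sub hx).mul tendsto_const_nhds)
  convert key using 2
  rw [Real.logb_div (ne_of_gt hα0) (ne_of_gt h1r0), Real.logb_div (ne_of_gt hβ0) (ne_of_gt hr0)]
  ring

private lemma aux_l_tendsto (α β r : ℝ) (hr0 : 0 < r) (hr1 : r < 1)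
    (x : ℕ → ℝ) (hx : Tendsto x atTop (nhds (1-r))) :
    Tendsto (fun T : ℕ =>
      (-(x T) * Real.logb 2 (x T) - (1 - x T) * Real.logb 2 (1 - x T)
      + x T * Real.logb 2 α + (1 - x T) * Real.logb 2 β)
      - Real.logb 2 ((T:ℝ)+1) / T) atTop
      (nhds ((-r * Real.logb 2 r - (1 - r) * Real.logb 2 (1 - r))
        + r * Real.logb 2 β + (1 - r) * Real.logb 2 α)) := by
  have h1r0 : (0:ℝ) < 1 - r := by linarith
  set g : ℝ → ℝ := fun y => -y * Real.logb 2 y - (1-y)*Real.logb 2 (1-y)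
      + y * Real.logb 2 α + (1-y) * Real.logb 2 β with hg
  have c1 : ContinuousAt (fun y : ℝ => Real.logb 2 y) (1-r) :=
    Real.continuousAt_logb (ne_of_gt h1r0)
  have c2 : ContinuousAt (fun y : ℝ => Real.logb 2 (1-y)) (1-r) := by
    have h : ContinuousAt (fun y : ℝ => Real.logb 2 y) (1-(1-r)) :=
      Real.continuousAt_logb (by simp; linarith)
    exact h.comp (by fun_prop)
  have cg : ContinuousAt g (1-r) :=
    ((((continuousAt_id.neg.mul c1).sub ((continuousAt_const.sub continuousAt_id).mul c2)).add
      (continuousAt_id.mul continuousAt_const)).add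
      ((continuousAt_const.sub continuousAt_id).mul continuousAt_const))
  have key : Tendsto (fun T : ℕ => g (x T) - Real.logb 2 ((T:ℝ)+1) / T) atTop
      (nhds (g (1-r) - 0)) := (cg.tendsto.comp hx).sub aux_err_tendsto
  have hval : g (1-r) - 0 = (-r * Real.logb 2 r - (1 - r) * Real.logb 2 (1 - r))
        + r * Real.logb 2 β + (1 - r) * Real.logb 2 α := by
    have h1 : (1:ℝ) - (1-r) = r := by ring
    simp only [hg, h1, sub_zero]
    ring
  rw [hval] at key
  exact key

private lemma aux_upper (α β r : ℝ) (hα0 : 0 < α) (hβ0 : 0 < β)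
    (hr0 : 0 < r) (hr1 : r < 1) (hsum : α + β = 1) (hβr : r < β) :
    ∀ᶠ T : ℕ in atTop,
      (1 / (T : ℝ)) * Real.logb 2
          (∑ t ∈ Finset.Icc ⌈(1 - r) * (T : ℝ)⌉₊ T,
            (T.choose t : ℝ) * α ^ t * β ^ (T - t)) ≤
      ((⌈(1 - r) * (T:ℝ)⌉₊ : ℝ) / T) * Real.logb 2 (α/(1-r))
        + (1 - (⌈(1 - r) * (T:ℝ)⌉₊ : ℝ) / T) * Real.logb 2 (β/r) := by
  have h1r0 : (0:ℝ) < 1 - r := by linarith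
  have hα1r : α < 1 - r := by linarith
  filter_upwards [eventually_ge_atTop 1] with T hT
  have hT0 : (0:ℝ) < T := by exact_mod_cast hT
  set k := ⌈(1 - r) * (T:ℝ)⌉₊ with hk
  have hkT : k ≤ T := Nat.ceil_le.mpr (by nlinarith)
  set p := 1 - r with hp
  set q := r with hq
  set M := (α/p)^k * (β/q)^(T-k) with hM
  have hM0 : 0 < M := by positivity
  have termle : ∀ t ∈ Finset.Icc k T,
      (T.choose t : ℝ) * α ^ t * β ^ (T - t) ≤ ((T.choose t : ℝ) * p^t * q^(T-t)) * M := by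
    intro t htm
    rw [Finset.mem_Icc] at htm
    obtain ⟨htk, htT⟩ := htm
    have hratio : (α/p)^t * (β/q)^(T-t) ≤ M := by
      obtain ⟨d, rfl⟩ : ∃ d, t = k + d := ⟨t - k, by omega⟩
      have hTk : T - k = (T - (k+d)) + d := by omega
      rw [hM, hTk, pow_add, pow_add]
      have hle : α/p ≤ β/q := by
        calc α/p ≤ 1 := by rw [div_le_one h1r0]; linarith
          _ ≤ β/q := by rw [le_div_iff₀ hr0]; linarith
      calc (α/p)^k * (α/p)^d * (β/q)^(T-(k+d))
          = (α/p)^d * ((α/p)^k * (β/q)^(T-(k+d))) := by ring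
        _ ≤ (β/q)^d * ((α/p)^k * (β/q)^(T-(k+d))) := by
            apply mul_le_mul_of_nonneg_right (pow_le_pow_left₀ (by positivity) hle d)
            positivity
        _ = (α/p)^k * ((β/q)^(T-(k+d)) * (β/q)^d) := by ring
    have hid : (T.choose t : ℝ) * α ^ t * β ^ (T - t)
        = ((T.choose t : ℝ) * p^t * q^(T-t)) * ((α/p)^t * (β/q)^(T-t)) := by
      rw [div_pow, div_pow]
      field_simp
    rw [hid]
    apply mul_le_mul_of_nonneg_left hratio
    positivity
  have hsum1 : ∑ t ∈ Finset.range (T+1), (T.choose t : ℝ) * p^t * q^(T-t) = 1 := by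
    have h := add_pow p q T
    have hpq : p + q = 1 := by rw [hp, hq]; ring
    rw [hpq, one_pow] at h
    calc ∑ t ∈ Finset.range (T+1), (T.choose t : ℝ) * p^t * q^(T-t)
        = ∑ t ∈ Finset.range (T+1), p^t * q^(T-t) * (T.choose t : ℝ) :=
          Finset.sum_congr rfl (fun t _ => by ring)
      _ = 1 := h.symm
  have hsub : Finset.Icc k T ⊆ Finset.range (T+1) := by
    intro t htm
    rw [Finset.mem_Icc] at htm
    rw [Finset.mem_range]
    omega
  have hSle : (∑ t ∈ Finset.Icc k T, (T.choose t : ℝ) * α ^ t * β ^ (T - t)) ≤ M := by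
    calc (∑ t ∈ Finset.Icc k T, (T.choose t : ℝ) * α ^ t * β ^ (T - t))
        ≤ ∑ t ∈ Finset.Icc k T, ((T.choose t : ℝ) * p^t * q^(T-t)) * M :=
          Finset.sum_le_sum termle
      _ = (∑ t ∈ Finset.Icc k T, (T.choose t : ℝ) * p^t * q^(T-t)) * M := by
          rw [Finset.sum_mul]
      _ ≤ (∑ t ∈ Finset.range (T+1), (T.choose t : ℝ) * p^t * q^(T-t)) * M := by
          apply mul_le_mul_of_nonneg_right _ hM0.le
          apply Finset.sum_le_sum_of_subset_of_nonneg hsub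
          intro t _ _
          positivity
      _ = M := by rw [hsum1, one_mul]
  have hS0 : 0 < ∑ t ∈ Finset.Icc k T, (T.choose t : ℝ) * α ^ t * β ^ (T - t) := by
    apply Finset.sum_pos _ (Finset.nonempty_Icc.mpr hkT)
    intro t htm
    rw [Finset.mem_Icc] at htm
    have : 0 < T.choose t := Nat.choose_pos htm.2
    positivity
  have hlogle : Real.logb 2 (∑ t ∈ Finset.Icc k T, (T.choose t : ℝ) * α ^ t * β ^ (T - t))
      ≤ Real.logb 2 M := Real.logb_le_logb_of_le one_lt_two hS0 hSle
  have hlogM : Real.logb 2 M = k * Real.logb 2 (α/p) + ((T:ℝ)-k) * Real.logb 2 (β/q) := by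
    rw [hM, Real.logb_mul (by positivity) (by positivity), Real.logb_pow, Real.logb_pow,
      Nat.cast_sub hkT]
  calc (1 / (T : ℝ)) * Real.logb 2 (∑ t ∈ Finset.Icc k T, (T.choose t : ℝ) * α ^ t * β ^ (T - t))
      ≤ (1 / (T : ℝ)) * Real.logb 2 M := by
        apply mul_le_mul_of_nonneg_left hlogle (by positivity)
    _ = ((k:ℝ)/T) * Real.logb 2 (α/p) + (1 - (k:ℝ)/T) * Real.logb 2 (β/q) := by
        rw [hlogM]
        field_simp

private lemma aux_lower (α β r : ℝ) (hα0 : 0 < α) (hβ0 : 0 < β)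
    (hr0 : 0 < r) (hr1 : r < 1) :
    ∀ᶠ T : ℕ in atTop,
      ((-((⌈(1 - r) * (T:ℝ)⌉₊:ℝ)/T) * Real.logb 2 ((⌈(1 - r) * (T:ℝ)⌉₊:ℝ)/T)
        - (1 - (⌈(1 - r) * (T:ℝ)⌉₊:ℝ)/T) * Real.logb 2 (1 - (⌈(1 - r) * (T:ℝ)⌉₊:ℝ)/T)
        + ((⌈(1 - r) * (T:ℝ)⌉₊:ℝ)/T) * Real.logb 2 α
        + (1 - (⌈(1 - r) * (T:ℝ)⌉₊:ℝ)/T) * Real.logb 2 β)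
        - Real.logb 2 ((T:ℝ)+1) / T) ≤
      (1 / (T : ℝ)) * Real.logb 2
          (∑ t ∈ Finset.Icc ⌈(1 - r) * (T : ℝ)⌉₊ T,
            (T.choose t : ℝ) * α ^ t * β ^ (T - t)) := by
  have h1r0 : (0:ℝ) < 1 - r := by linarith
  have hev : ∀ᶠ T : ℕ in atTop, (1:ℝ)/r ≤ (T:ℝ) :=
    tendsto_natCast_atTop_atTop.eventually_ge_atTop (1/r)
  filter_upwards [eventually_ge_atTop 1, hev] with T hT hrT
  have hT0 : (0:ℝ) < T := by exact_mod_cast hT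
  set k := ⌈(1 - r) * (T:ℝ)⌉₊ with hkdef
  have hk1 : 1 ≤ k := Nat.ceil_pos.mpr (by positivity)
  have hkT : k < T := by
    have h1 : (k:ℝ) < (1-r) * T + 1 := Nat.ceil_lt_add_one (by positivity)
    have h2 : (1:ℝ) ≤ r * T := by
      rw [div_le_iff₀ hr0] at hrT
      linarith
    have : (k:ℝ) < T := by linarith
    exact_mod_cast this
  have hkT' : k ≤ T := hkT.le
  have hk0R : (0:ℝ) < k := by exact_mod_cast hk1
  have hTk1 : 1 ≤ T - k := by omega
  have hTk0R : (0:ℝ) < ((T-k:ℕ):ℝ) := by exact_mod_cast hTk1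
  have hC0 : 0 < T.choose k := Nat.choose_pos hkT'
  have hC0R : (0:ℝ) < (T.choose k : ℝ) := by exact_mod_cast hC0
  have hterm : (T.choose k : ℝ) * α ^ k * β ^ (T - k) ≤
      ∑ t ∈ Finset.Icc k T, (T.choose t : ℝ) * α ^ t * β ^ (T - t) := by
    apply Finset.single_le_sum (f := fun t => (T.choose t : ℝ) * α ^ t * β ^ (T - t))
    · intro t _; positivity
    · rw [Finset.mem_Icc]; omega
  have hterm0 : (0:ℝ) < (T.choose k : ℝ) * α ^ k * β ^ (T - k) := by positivity
  have hcb : ((T:ℝ))^T ≤ ((T:ℝ)+1) * ((T.choose k : ℝ) * ((k:ℕ):ℝ)^k * ((T-k:ℕ):ℝ)^(T-k)) := by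
    exact_mod_cast central_bound T k hkT'
  have hlogC : (T:ℝ) * Real.logb 2 T - (k:ℝ) * Real.logb 2 k
      - ((T-k:ℕ):ℝ) * Real.logb 2 ((T-k:ℕ):ℝ) - Real.logb 2 ((T:ℝ)+1)
      ≤ Real.logb 2 (T.choose k : ℝ) := by
    have h1 : Real.logb 2 ((T:ℝ)^T) ≤
        Real.logb 2 (((T:ℝ)+1) * ((T.choose k : ℝ) * ((k:ℕ):ℝ)^k * ((T-k:ℕ):ℝ)^(T-k))) :=
      Real.logb_le_logb_of_le one_lt_two (by positivity) hcb
    rw [Real.logb_pow, Real.logb_mul (by positivity) (by positivity),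
      Real.logb_mul (by positivity) (by positivity),
      Real.logb_mul (by positivity) (by positivity),
      Real.logb_pow, Real.logb_pow] at h1
    linarith
  have hlogterm : Real.logb 2 ((T.choose k : ℝ) * α ^ k * β ^ (T - k)) =
      Real.logb 2 (T.choose k : ℝ) + (k:ℝ) * Real.logb 2 α + ((T-k:ℕ):ℝ) * Real.logb 2 β := by
    rw [Real.logb_mul (by positivity) (by positivity),
      Real.logb_mul (by positivity) (by positivity), Real.logb_pow, Real.logb_pow]
  have hlogS : Real.logb 2 ((T.choose k : ℝ) * α ^ k * β ^ (T - k)) ≤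
      Real.logb 2 (∑ t ∈ Finset.Icc k T, (T.choose t : ℝ) * α ^ t * β ^ (T - t)) :=
    Real.logb_le_logb_of_le one_lt_two hterm0 hterm
  have hraw : ((T:ℝ) * Real.logb 2 T - (k:ℝ) * Real.logb 2 k
      - ((T-k:ℕ):ℝ) * Real.logb 2 ((T-k:ℕ):ℝ) - Real.logb 2 ((T:ℝ)+1)
      + (k:ℝ) * Real.logb 2 α + ((T-k:ℕ):ℝ) * Real.logb 2 β) ≤
      Real.logb 2 (∑ t ∈ Finset.Icc k T, (T.choose t : ℝ) * α ^ t * β ^ (T - t)) := by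
    rw [hlogterm] at hlogS
    linarith
  have hTk_cast : ((T-k:ℕ):ℝ) = (T:ℝ) - (k:ℝ) := Nat.cast_sub hkT'
  have hxk : Real.logb 2 ((k:ℝ)/T) = Real.logb 2 (k:ℝ) - Real.logb 2 (T:ℝ) :=
    Real.logb_div (by positivity) (by positivity)
  have h1x : (1:ℝ) - (k:ℝ)/T = ((T-k:ℕ):ℝ)/T := by
    rw [hTk_cast]; field_simp
  have hx1 : Real.logb 2 (1 - (k:ℝ)/T) = Real.logb 2 ((T-k:ℕ):ℝ) - Real.logb 2 (T:ℝ) := by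
    rw [h1x]
    exact Real.logb_div (by positivity) (by positivity)
  have hident : ((-((k:ℝ)/T) * Real.logb 2 ((k:ℝ)/T)
        - (1 - (k:ℝ)/T) * Real.logb 2 (1 - (k:ℝ)/T)
        + ((k:ℝ)/T) * Real.logb 2 α
        + (1 - (k:ℝ)/T) * Real.logb 2 β)
        - Real.logb 2 ((T:ℝ)+1) / T) =
      (1/(T:ℝ)) * ((T:ℝ) * Real.logb 2 T - (k:ℝ) * Real.logb 2 k
      - ((T-k:ℕ):ℝ) * Real.logb 2 ((T-k:ℕ):ℝ) - Real.logb 2 ((T:ℝ)+1)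
      + (k:ℝ) * Real.logb 2 α + ((T-k:ℕ):ℝ) * Real.logb 2 β) := by
    rw [hxk, hx1, hTk_cast]
    field_simp
    ring
  rw [hident]
  apply mul_le_mul_of_nonneg_left hraw (by positivity)

theorem large_deviation_rate_beta_gt_r
    (α β r : ℝ) (hα : α ∈ Set.Ioo (0:ℝ) 1) (hβ : β ∈ Set.Ioo (0:ℝ) 1)
    (hr : r ∈ Set.Ioo (0:ℝ) 1) (hsum : α + β = 1) (hβr : r < β) :
    Tendsto (fun T : ℕ =>
        (1 / (T : ℝ)) * Real.logb 2
          (∑ t ∈ Finset.Icc ⌈(1 - r) * (T : ℝ)⌉₊ T,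
            (T.choose t : ℝ) * α ^ t * β ^ (T - t)))
      atTop
      (nhds ((-r * Real.logb 2 r - (1 - r) * Real.logb 2 (1 - r))
        + r * Real.logb 2 β + (1 - r) * Real.logb 2 α)) := by
  obtain ⟨hα0, hα1⟩ := hα
  obtain ⟨hβ0, hβ1⟩ := hβ
  obtain ⟨hr0, hr1⟩ := hr
  have hx := aux_x_tendsto r hr0 hr1
  exact tendsto_of_tendsto_of_tendsto_of_le_of_le'
    (aux_l_tendsto α β r hr0 hr1 _ hx)
    (aux_m_tendsto α β r hα0 hβ0 hr0 hr1 _ hx)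
    (aux_lower α β r hα0 hβ0 hr0 hr1)
    (aux_upper α β r hα0 hβ0 hr0 hr1 hsum hβr)
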